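/- Let k ≥ 2 and consider the k×k grid graph on vertex set (Fin k) × (Fin k). Every subset M of the vertices that contains all vertices (i, 0) of row 0 and all vertices (i, j) whose column index i is odd induces a connected subgraph of the k×k grid graph. -/

import Mathlib

/-- The `k × k` grid graph on vertex set `Fin k × Fin k`: two vertices are
adjacent iff they agree in one coordinate and differ by exactly 1 in the other. -/
def gridGraph (k : ℕ) : SimpleGraph (Fin k × Fin k) where
  Adj a b :=
    (a.1 = b.1 ∧ (a.2.val + 1 = b.2.val ∨ b.2.val + 1 = a.2.val)) ∨
    (a.2 = b.2 ∧ (a.1.val + 1 = b.1.val ∨ b.1.val + 1 = a.1.val))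
  symm := by
    constructor
    intro a b h
    rcases h with ⟨h1, h2⟩ | ⟨h1, h2⟩
    · exact Or.inl ⟨h1.symm, h2.symm⟩
    · exact Or.inr ⟨h1.symm, h2.symm⟩
  loopless := by
    constructor
    intro a h
    rcases h with ⟨_, h⟩ | ⟨_, h⟩ <;> omega

/-- For `k ≥ 2`, every set `M` of vertices of the `k × k` grid graph containing
all vertices `(i, 0)` of row `0` and all vertices `(i, j)` whose column index `i`
is odd induces a connected subgraph. -/
theorem gridGraph_induce_row0_oddColumns_connected
    (k : ℕ) (hk : 2 ≤ k) (M : Set (Fin k × Fin k))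
    (hrow0 : ∀ i : Fin k, (i, (⟨0, by omega⟩ : Fin k)) ∈ M)
    (hodd : ∀ i j : Fin k, Odd i.val → (i, j) ∈ M) :
    (((gridGraph k).induce M)).Connected := by
  set G := (gridGraph k).induce M with hG
  have h0k : (0 : ℕ) < k := by omega
  -- helper: row 0 vertices are reachable to (0,0)
  have hA : ∀ n (hn : n < k),
      G.Reachable ⟨((⟨n, hn⟩ : Fin k), ⟨0, h0k⟩), hrow0 _⟩
        ⟨((⟨0, h0k⟩ : Fin k), ⟨0, h0k⟩), hrow0 _⟩ := by
    intro n
    induction n with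
    | zero => intro hn; rfl
    | succ m ih =>
      intro hn
      have hm : m < k := by omega
      have hadj : G.Adj ⟨((⟨m + 1, hn⟩ : Fin k), ⟨0, h0k⟩), hrow0 _⟩
          ⟨((⟨m, hm⟩ : Fin k), ⟨0, h0k⟩), hrow0 _⟩ := by
        simp only [hG, SimpleGraph.comap_adj, gridGraph]
        exact Or.inr ⟨rfl, Or.inr rfl⟩
      exact hadj.reachable.trans (ih hm)
  -- helper: odd columns: (i, j) reachable to (i, 0)
  have hB : ∀ (i : Fin k) (hi : Odd i.val) (m : ℕ) (hm : m < k),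
      G.Reachable ⟨(i, ⟨m, hm⟩), hodd i _ hi⟩ ⟨(i, ⟨0, h0k⟩), hrow0 _⟩ := by
    intro i hi m
    induction m with
    | zero => intro hm; rfl
    | succ n ih =>
      intro hm
      have hn : n < k := by omega
      have hadj : G.Adj ⟨(i, (⟨n + 1, hm⟩ : Fin k)), hodd i _ hi⟩
          ⟨(i, (⟨n, hn⟩ : Fin k)), hodd i _ hi⟩ := by
        simp only [hG, SimpleGraph.comap_adj, gridGraph]
        exact Or.inl ⟨rfl, Or.inr rfl⟩
      exact hadj.reachable.trans (ih hn)
  -- every vertex of M reaches (0,0)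
  have key : ∀ (v : {x // x ∈ M}),
      G.Reachable v ⟨((⟨0, h0k⟩ : Fin k), ⟨0, h0k⟩), hrow0 _⟩ := by
    rintro ⟨⟨i, j⟩, hv⟩
    by_cases hodd_i : Odd i.val
    · have r1 : G.Reachable ⟨(i, j), hv⟩ ⟨(i, ⟨0, h0k⟩), hrow0 _⟩ :=
        hB i hodd_i j.val j.isLt
      exact r1.trans (hA i.val i.isLt)
    · by_cases hj : j.val = 0
      · obtain rfl : j = ⟨0, h0k⟩ := Fin.ext hj
        exact hA i.val i.isLt
      · -- i even, j ≥ 1: move to an adjacent odd column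
        have hie : Even i.val := Nat.not_odd_iff_even.mp hodd_i
        -- choose i' odd adjacent to i
        obtain ⟨i', hi'odd, hadj⟩ :
            ∃ i' : Fin k, Odd i'.val ∧
              (i.val + 1 = i'.val ∨ i'.val + 1 = i.val) := by
          rcases hie with ⟨t, ht⟩
          by_cases h : i.val + 1 < k
          · refine ⟨⟨i.val + 1, h⟩, Nat.odd_iff.mpr ?_, Or.inl rfl⟩
            simp only [Fin.val_mk]; omega
          · have h1 : 1 ≤ i.val := by
              have h2 := i.isLt; omega
            refine ⟨⟨i.val - 1, by omega⟩, Nat.odd_iff.mpr ?_, Or.inr ?_⟩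
            · simp only [Fin.val_mk]; omega
            · simp only [Fin.val_mk]; omega
        have hadjG : G.Adj ⟨(i, j), hv⟩ ⟨(i', j), hodd i' j hi'odd⟩ := by
          simp only [hG, SimpleGraph.comap_adj, gridGraph]
          exact Or.inr ⟨rfl, hadj⟩
        have r1 : G.Reachable ⟨(i', j), hodd i' j hi'odd⟩
            ⟨(i', ⟨0, h0k⟩), hrow0 _⟩ := hB i' hi'odd j.val j.isLt
        have r2 : G.Reachable ⟨(i', (⟨0, h0k⟩ : Fin k)), hrow0 _⟩
            ⟨((⟨0, h0k⟩ : Fin k), ⟨0, h0k⟩), hrow0 _⟩ := hA i'.val i'.isLt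
        exact hadjG.reachable.trans (r1.trans r2)
  have : Nonempty ↥M := ⟨⟨((⟨0, h0k⟩ : Fin k), ⟨0, h0k⟩), hrow0 _⟩⟩
  exact ⟨fun u v => (key u).trans (key v).symm⟩
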